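/- Let (h,φ) be an entropic functional pair, let N ≥ 2 and P ∈ [1/N, 1]. Then the minimum of H_{(h,φ)}(p) over all probability vectors p = (p_1,…,p_N) with max_k p_k = P equals H^min_{(h,φ)}(P) = h( ⌊1/P⌋ φ(P) + φ(1 − ⌊1/P⌋ P) ), and the minimum is attained exactly at the probability vectors whose components are a permutation of the N-dimensional vector having its first ⌊1/P⌋ components equal to P, its next component (present when ⌊1/P⌋ < N) equal to 1 − ⌊1/P⌋ P, and all remaining components equal to zero. -/

import Mathlib

open scoped BigOperators

noncomputable section

/-- An entropic functional pair `(h, φ)` in the sense of Salicrú. -/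
structure EntropicPair where
  phi : ℝ → ℝ
  h : ℝ → ℝ
  phi_cont : ContinuousOn phi (Set.Icc 0 1)
  h_cont : Continuous h
  phi_zero : phi 0 = 0
  norm_zero : h (phi 1) = 0
  admissible : (StrictConcaveOn ℝ (Set.Icc (0:ℝ) 1) phi ∧ StrictMono h) ∨
               (StrictConvexOn ℝ (Set.Icc (0:ℝ) 1) phi ∧ StrictAnti h)

/-- `p` is a probability vector. -/
def IsProbVec {ι : Type*} [Fintype ι] (p : ι → ℝ) : Prop :=
  (∀ k, 0 ≤ p k) ∧ ∑ k, p k = 1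

/-- The Salicrú `(h,φ)`-entropy of a probability vector. -/
noncomputable def EntropicPair.H (e : EntropicPair) {ι : Type*} [Fintype ι] (p : ι → ℝ) : ℝ :=
  e.h (∑ k, e.phi (p k))

/-- `H^min_{(h,φ)}(P) = h(⌊1/P⌋ φ(P) + φ(1 − ⌊1/P⌋P))`. -/
noncomputable def EntropicPair.Hmin (e : EntropicPair) (P : ℝ) : ℝ :=
  e.h ((⌊1 / P⌋₊ : ℝ) * e.phi P + e.phi (1 - (⌊1 / P⌋₊ : ℝ) * P))

/-- `D_{(h,φ)}(θ) = H^min_{(h,φ)}(cos²θ)`. -/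
noncomputable def EntropicPair.D (e : EntropicPair) (θ : ℝ) : ℝ :=
  e.Hmin (Real.cos θ ^ 2)

/-- The `N`-dimensional vector with first `⌊1/P⌋` components equal to `P`, the next component
(present when `⌊1/P⌋ < N`) equal to `1 − ⌊1/P⌋P`, and all remaining components zero. -/
noncomputable def wvec (N : ℕ) (P : ℝ) : Fin N → ℝ := fun k =>
  if (k : ℕ) < ⌊1 / P⌋₊ then P
  else if (k : ℕ) = ⌊1 / P⌋₊ then 1 - (⌊1 / P⌋₊ : ℝ) * P
  else 0

/-- `p ≺ q`: `p` is majorized by `q`. (The sums of the `m` largest components of a vector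
`v` coincide with the maxima, over subsets `s` of cardinality `m`, of `∑_{k∈s} v k`; this is
the standard subset-sum characterization of majorization.) -/
def Majorizes {N : ℕ} (p q : Fin N → ℝ) : Prop :=
  (∑ k, p k = ∑ k, q k) ∧
  ∀ s : Finset (Fin N), ∃ t : Finset (Fin N), t.card = s.card ∧ ∑ k ∈ s, p k ≤ ∑ k ∈ t, q k


section SalicruAux
open Finset
open scoped Classical

lemma exists_perm_comp {α : Type*} {N : ℕ} (p q : Fin N → α)
    (h : ∀ a : α, (univ.filter fun k => p k = a).card = (univ.filter fun k => q k = a).card) :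
    ∃ σ : Equiv.Perm (Fin N), p = q ∘ σ := by
  have e : ∀ a : α, (p ⁻¹' {a}) ≃ (q ⁻¹' {a}) := by
    intro a
    apply Fintype.equivOfCardEq
    have h1 : Fintype.card (p ⁻¹' {a}) = (univ.filter fun k => p k = a).card := by
      simp [Set.preimage, Fintype.card_subtype]
    have h2 : Fintype.card (q ⁻¹' {a}) = (univ.filter fun k => q k = a).card := by
      simp [Set.preimage, Fintype.card_subtype]
    rw [h1, h2]; exact h a
  refine ⟨(Equiv.sigmaFiberEquiv p).symm.trans ((Equiv.sigmaCongrRight e).trans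
      (Equiv.sigmaFiberEquiv q)), ?_⟩
  funext x
  have hx : ((Equiv.sigmaFiberEquiv p).symm x) = ⟨p x, ⟨x, rfl⟩⟩ := rfl
  simp only [Function.comp_apply, Equiv.trans_apply, hx, Equiv.sigmaCongrRight_apply,
    Equiv.sigmaFiberEquiv]
  exact ((e (p x)) ⟨x, rfl⟩).2.symm

lemma two_point_strict {φ : ℝ → ℝ} (hφ : StrictConvexOn ℝ (Set.Icc 0 1) φ)
    {lo hi a b : ℝ} (h0 : 0 ≤ lo) (h1 : hi ≤ 1) (hab : a + b = lo + hi)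
    (hla : lo < a) (hah : a < hi) : φ a + φ b < φ lo + φ hi := by
  have hlh : lo < hi := hla.trans hah
  set lam : ℝ := (hi - a) / (hi - lo) with hlam
  have hpos : (0:ℝ) < hi - lo := by linarith
  have hl0 : 0 < lam := div_pos (by linarith) hpos
  have hl1 : lam < 1 := by
    rw [div_lt_one hpos]; linarith
  have hmemlo : lo ∈ Set.Icc (0:ℝ) 1 := ⟨h0, by linarith⟩
  have hmemhi : hi ∈ Set.Icc (0:ℝ) 1 := ⟨by linarith, h1⟩
  have hsum : lam + (1 - lam) = 1 := by ring
  have ha' : a = lam * lo + (1 - lam) * hi := by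
    rw [hlam, div_mul_eq_mul_div, one_sub_div (ne_of_gt hpos), div_mul_eq_mul_div,
      ← add_div, eq_div_iff (ne_of_gt hpos)]; ring
  have hb' : b = (1 - lam) * lo + lam * hi := by
    have : b = lo + hi - a := by linarith
    rw [this, ha']; ring
  have i1 := hφ.2 hmemlo hmemhi (ne_of_lt hlh) hl0 (by linarith) hsum
  have i2 := hφ.2 hmemlo hmemhi (ne_of_lt hlh) (by linarith : (0:ℝ) < 1 - lam) hl0 (by ring)
  rw [smul_eq_mul, smul_eq_mul] at i1 i2
  rw [ha', hb']
  calc φ (lam * lo + (1-lam) * hi) + φ ((1-lam) * lo + lam * hi)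
      < (lam * φ lo + (1-lam) * φ hi) + ((1-lam) * φ lo + lam * φ hi) := by
        exact add_lt_add i1 i2
    _ = φ lo + φ hi := by ring

lemma m_facts {N : ℕ} {P : ℝ} (hN : 2 ≤ N) (hP1 : 1/(N:ℝ) ≤ P) (hP2 : P ≤ 1) :
    0 < P ∧ 1 ≤ ⌊1/P⌋₊ ∧ ⌊1/P⌋₊ ≤ N ∧ (⌊1/P⌋₊:ℝ)*P ≤ 1 ∧
    1 - (⌊1/P⌋₊:ℝ)*P < P ∧ (⌊1/P⌋₊ = N → 1 - (⌊1/P⌋₊:ℝ)*P = 0) := by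
  have hN0 : (0:ℝ) < N := by positivity
  have hP0 : 0 < P := lt_of_lt_of_le (by positivity) hP1
  have hNP : 1 ≤ (N:ℝ) * P := by
    have h := mul_le_mul_of_nonneg_left hP1 (le_of_lt hN0)
    rwa [mul_one_div, div_self (ne_of_gt hN0)] at h
  have hinv1 : (1:ℝ) ≤ 1/P := by rw [le_div_iff₀ hP0]; linarith
  have hm1 : 1 ≤ ⌊1/P⌋₊ := Nat.le_floor (by exact_mod_cast hinv1)
  have hinvN : 1/P ≤ (N:ℝ) := by rw [div_le_iff₀ hP0]; linarith
  have hmN : ⌊1/P⌋₊ ≤ N := by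
    calc ⌊1/P⌋₊ ≤ ⌊(N:ℝ)⌋₊ := Nat.floor_le_floor hinvN
    _ = N := Nat.floor_natCast N
  have hfl : (⌊1/P⌋₊:ℝ) ≤ 1/P := Nat.floor_le (by positivity)
  have hmP : (⌊1/P⌋₊:ℝ)*P ≤ 1 := by
    have h := mul_le_mul_of_nonneg_right hfl (le_of_lt hP0)
    rwa [div_mul_cancel₀ 1 (ne_of_gt hP0)] at h
  have hlt : 1/P < (⌊1/P⌋₊:ℝ) + 1 := Nat.lt_floor_add_one _
  have hrP : 1 - (⌊1/P⌋₊:ℝ)*P < P := by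
    have h := mul_lt_mul_of_pos_right hlt hP0
    rw [div_mul_cancel₀ 1 (ne_of_gt hP0)] at h
    nlinarith
  refine ⟨hP0, hm1, hmN, hmP, hrP, fun h => ?_⟩
  rw [h] at hmP ⊢; linarith

lemma sum_update2 {N : ℕ} (f : Fin N → ℝ) {i j : Fin N} (hij : i ≠ j) (x y : ℝ) :
    ∑ k, Function.update (Function.update f i x) j y k = (∑ k, f k) - f i - f j + x + y := by
  rw [Finset.sum_update_of_mem (mem_univ j)]
  have hi : i ∈ univ \ ({j} : Finset (Fin N)) := by simp [hij]
  rw [Finset.sum_update_of_mem hi]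
  have h1 : ∑ k ∈ (univ \ {j}) \ {i}, f k
      = (∑ k ∈ univ \ {j}, f k) - f i := by
    rw [← Finset.erase_eq, Finset.sum_erase_eq_sub hi]
  have h2 : ∑ k ∈ (univ : Finset (Fin N)) \ {j}, f k = (∑ k, f k) - f j := by
    rw [← Finset.erase_eq, Finset.sum_erase_eq_sub (mem_univ j)]
  rw [h1, h2]; ring

lemma card_filter_lt {N : ℕ} (m : ℕ) (hmN : m ≤ N) :
    (univ.filter fun k : Fin N => (k : ℕ) < m).card = m := by
  apply Finset.card_eq_of_bijective (fun i h => ⟨i, lt_of_lt_of_le h hmN⟩)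
  · intro a ha
    simp only [mem_filter, mem_univ, true_and] at ha
    exact ⟨a, ha, rfl⟩
  · intro i h
    simp [h]
  · intro i j hi hj hij
    simpa [Fin.ext_iff] using hij

lemma wvec_cases {N : ℕ} {P : ℝ} (k : Fin N) :
    ((k:ℕ) < ⌊1/P⌋₊ ∧ wvec N P k = P) ∨
    ((k:ℕ) = ⌊1/P⌋₊ ∧ wvec N P k = 1 - (⌊1/P⌋₊:ℝ)*P) ∨
    (⌊1/P⌋₊ < (k:ℕ) ∧ wvec N P k = 0) := by
  unfold wvec
  rcases lt_trichotomy (k:ℕ) ⌊1/P⌋₊ with h | h | h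
  · exact Or.inl ⟨h, if_pos h⟩
  · exact Or.inr (Or.inl ⟨h, by rw [if_neg (by omega), if_pos h]⟩)
  · exact Or.inr (Or.inr ⟨h, by rw [if_neg (by omega), if_neg (by omega)]⟩)

lemma sum_wvec_apply {N : ℕ} {P : ℝ} (f : ℝ → ℝ) (hf0 : f 0 = 0)
    (hmN : ⌊1/P⌋₊ ≤ N) (hrN : ⌊1/P⌋₊ = N → 1 - (⌊1/P⌋₊:ℝ)*P = 0) :
    ∑ k : Fin N, f (wvec N P k) = (⌊1/P⌋₊:ℝ) * f P + f (1 - (⌊1/P⌋₊:ℝ)*P) := by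
  set m := ⌊1/P⌋₊ with hm
  set r := 1 - (m:ℝ)*P with hr
  have hsplit : ∀ k : Fin N, f (wvec N P k) =
      (if (k:ℕ) < m then f P else 0) + (if (k:ℕ) = m then f r else 0) := by
    intro k
    rcases wvec_cases (P := P) k with ⟨h, hv⟩ | ⟨h, hv⟩ | ⟨h, hv⟩
    · rw [hv, if_pos h, if_neg (by omega)]; ring
    · rw [hv, if_neg (by omega), if_pos h]; ring
    · rw [hv, if_neg (by omega), if_neg (by omega), hf0]; ring
  rw [Finset.sum_congr rfl (fun k _ => hsplit k), Finset.sum_add_distrib]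
  congr 1
  · rw [← Finset.sum_filter, Finset.sum_const, card_filter_lt m hmN]
    simp [mul_comm]
  · rcases lt_or_eq_of_le hmN with h | h
    · rw [Finset.sum_eq_single_of_mem (⟨m, h⟩ : Fin N) (mem_univ _)]
      · simp
      · intro b _ hb
        exact if_neg (fun hc => hb (Fin.ext hc))
    · have h0 : ∀ k : Fin N, (if (k:ℕ) = m then f r else 0) = 0 := fun k =>
        if_neg (by have := k.isLt; omega)
      rw [Finset.sum_congr rfl (fun k _ => h0 k), Finset.sum_const, hrN h, hf0]
      simp

lemma step_lemma {N : ℕ} {P : ℝ} {φ : ℝ → ℝ} (hφ : StrictConvexOn ℝ (Set.Icc 0 1) φ)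
    (hP2 : P ≤ 1) (p : Fin N → ℝ) (hp0 : ∀ k, 0 ≤ p k) (hpP : ∀ k, p k ≤ P)
    (hps : ∑ k, p k = 1)
    (hc : 2 ≤ (univ.filter fun k => 0 < p k ∧ p k < P).card) :
    ∃ q : Fin N → ℝ, (∀ k, 0 ≤ q k) ∧ (∀ k, q k ≤ P) ∧ (∑ k, q k = 1) ∧
      (univ.filter fun k => 0 < q k ∧ q k < P).card
        < (univ.filter fun k => 0 < p k ∧ p k < P).card ∧
      ∑ k, φ (p k) < ∑ k, φ (q k) := by
  classical
  set F := univ.filter fun k => 0 < p k ∧ p k < P with hF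
  obtain ⟨i, hiF, j, hjF, hij⟩ := Finset.one_lt_card.mp (show 1 < F.card by omega)
  have hi : 0 < p i ∧ p i < P := (Finset.mem_filter.mp hiF).2
  have hj : 0 < p j ∧ p j < P := (Finset.mem_filter.mp hjF).2
  set s := p i + p j with hs
  -- helper to finish given new values x (at i) and y (at j)
  have main : ∀ x y : ℝ, 0 ≤ x → x ≤ P → 0 ≤ y → y ≤ P → x + y = s →
      (¬ (0 < x ∧ x < P) ∨ ¬ (0 < y ∧ y < P)) →
      φ (p i) + φ (p j) < φ x + φ y →
      ∃ q : Fin N → ℝ, (∀ k, 0 ≤ q k) ∧ (∀ k, q k ≤ P) ∧ (∑ k, q k = 1) ∧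
      (univ.filter fun k => 0 < q k ∧ q k < P).card < F.card ∧
      ∑ k, φ (p k) < ∑ k, φ (q k) := by
    intro x y hx0 hxP hy0 hyP hxy hnotboth hlt
    set q := Function.update (Function.update p i x) j y with hq
    have hqi : q i = x := by
      rw [hq, Function.update_of_ne hij, Function.update_self]
    have hqj : q j = y := by rw [hq, Function.update_self]
    have hqk : ∀ k, k ≠ i → k ≠ j → q k = p k := by
      intro k hki hkj
      rw [hq, Function.update_of_ne hkj, Function.update_of_ne hki]
    have hval : ∀ k, q k = x ∨ q k = y ∨ q k = p k := by
      intro k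
      by_cases h1 : k = i
      · subst h1; exact Or.inl hqi
      · by_cases h2 : k = j
        · subst h2; exact Or.inr (Or.inl hqj)
        · exact Or.inr (Or.inr (hqk k h1 h2))
    refine ⟨q, ?_, ?_, ?_, ?_, ?_⟩
    · intro k; rcases hval k with h | h | h <;> rw [h]; exacts [hx0, hy0, hp0 k]
    · intro k; rcases hval k with h | h | h <;> rw [h]; exacts [hxP, hyP, hpP k]
    · rw [hq, sum_update2 p hij x y, hps]; linarith
    · have hsub : (univ.filter fun k => 0 < q k ∧ q k < P) ⊆
          F.erase (if 0 < x ∧ x < P then j else i) := by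
        intro k hk
        have hk' : 0 < q k ∧ q k < P := (Finset.mem_filter.mp hk).2
        by_cases h1 : k = i
        · subst h1
          rw [hqi] at hk'
          rw [Finset.mem_erase]
          rw [if_pos hk']
          refine ⟨hij, hiF⟩
        · by_cases h2 : k = j
          · subst h2
            rw [hqj] at hk'
            rw [Finset.mem_erase]
            have hxint : ¬ (0 < x ∧ x < P) := by tauto
            rw [if_neg hxint]
            exact ⟨Ne.symm hij, hjF⟩
          · rw [hqk k h1 h2] at hk'
            exact Finset.mem_erase.mpr ⟨by
              by_cases hc' : 0 < x ∧ x < P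
              · rw [if_pos hc']; exact h2
              · rw [if_neg hc']; exact h1, Finset.mem_filter.mpr ⟨mem_univ k, hk'⟩⟩
      have hmem : (if 0 < x ∧ x < P then j else i) ∈ F := by
        split <;> assumption
      calc (univ.filter fun k => 0 < q k ∧ q k < P).card
          ≤ (F.erase _).card := Finset.card_le_card hsub
        _ < F.card := Finset.card_erase_lt_of_mem hmem
    · have hcomp : (fun k => φ (q k)) =
          Function.update (Function.update (fun k => φ (p k)) i (φ x)) j (φ y) := by
        funext k
        by_cases h1 : k = j
        · subst h1; rw [hqj, Function.update_self]
        · rw [Function.update_of_ne h1]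
          by_cases h2 : k = i
          · subst h2; rw [hqi, Function.update_self]
          · rw [hqk k h2 h1, Function.update_of_ne h2]
      calc ∑ k, φ (p k) = (∑ k, φ (p k)) - φ (p i) - φ (p j) + φ (p i) + φ (p j) := by ring
        _ < (∑ k, φ (p k)) - φ (p i) - φ (p j) + φ x + φ y := by linarith
        _ = ∑ k, φ (q k) := by rw [hcomp, sum_update2 (fun k => φ (p k)) hij (φ x) (φ y)]
  by_cases hsP : s ≤ P
  · -- merge: x = s at i, y = 0 at j
    refine main s 0 (by linarith [hi.1, hj.1]) hsP le_rfl (by linarith [hi.1, hi.2]) (by ring)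
      (Or.inr (by simp)) ?_
    have := two_point_strict hφ (lo := 0) (hi := s) (a := p i) (b := p j)
      le_rfl (le_trans hsP hP2) (by ring) hi.1 (by linarith [hj.1])
    linarith
  · -- transfer: x = P at i, y = s - P at j
    push_neg at hsP
    refine main P (s - P) (by linarith [hi.1, hi.2]) le_rfl (by linarith)
      (by linarith [hi.2, hj.2]) (by ring) (Or.inl (by simp)) ?_
    have := two_point_strict hφ (lo := s - P) (hi := P) (a := p i) (b := p j)
      (by linarith) hP2 (by ring) (by linarith [hj.2]) hi.2
    linarith

lemma fiber_cards_eq {N : ℕ} {p q : Fin N → ℝ} {P r : ℝ} (hP0 : P ≠ 0) (hPr : r ≠ P)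
    (hp : ∀ k, p k = P ∨ p k = r ∨ p k = 0) (hq : ∀ k, q k = P ∨ q k = r ∨ q k = 0)
    (hfP : (univ.filter fun k => p k = P).card = (univ.filter fun k => q k = P).card)
    (hfr : r ≠ 0 → (univ.filter fun k => p k = r).card = (univ.filter fun k => q k = r).card) :
    ∀ a : ℝ, (univ.filter fun k => p k = a).card = (univ.filter fun k => q k = a).card := by
  -- zero-fiber helper
  have hzero : (univ.filter fun k => p k = 0).card = (univ.filter fun k => q k = 0).card := by
    by_cases hr0 : r = 0
    · subst hr0
      have key : ∀ f : Fin N → ℝ, (∀ k, f k = P ∨ f k = 0 ∨ f k = 0) →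
          (univ.filter fun k => f k = 0) = univ \ (univ.filter fun k => f k = P) := by
        intro f hf
        ext k
        simp only [mem_filter, mem_univ, true_and, mem_sdiff]
        constructor
        · intro h hc; rw [h] at hc; exact hP0 hc.symm
        · intro h; rcases hf k with h' | h' | h' <;> first | exact h' | exact absurd h' h
      rw [key p hp, key q hq, Finset.card_sdiff_of_subset (Finset.filter_subset _ _),
        Finset.card_sdiff_of_subset (Finset.filter_subset _ _), hfP]
    · have key : ∀ f : Fin N → ℝ, (∀ k, f k = P ∨ f k = r ∨ f k = 0) →
          (univ.filter fun k => f k = 0) = univ \ ((univ.filter fun k => f k = P) ∪ (univ.filter fun k => f k = r)) := by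
        intro f hf
        ext k
        simp only [mem_filter, mem_univ, true_and, mem_sdiff, mem_union, not_or]
        constructor
        · intro h
          constructor
          · intro hc; rw [h] at hc; exact hP0 hc.symm
          · intro hc; rw [h] at hc; exact hr0 hc.symm
        · intro ⟨h1, h2⟩; rcases hf k with h' | h' | h' <;> first | exact h' | exact absurd h' h1 | exact absurd h' h2
      have hd : ∀ f : Fin N → ℝ,
          Disjoint (univ.filter fun k => f k = P) (univ.filter fun k => f k = r) := by
        intro f
        rw [Finset.disjoint_left]
        intro k hk1 hk2
        simp only [mem_filter] at hk1 hk2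
        exact hPr (hk2.2 ▸ hk1.2 ▸ rfl)
      rw [key p hp, key q hq,
        Finset.card_sdiff_of_subset (Finset.subset_univ _), Finset.card_sdiff_of_subset (Finset.subset_univ _),
        Finset.card_union_of_disjoint (hd p), Finset.card_union_of_disjoint (hd q),
        hfP, hfr hr0]
  intro a
  by_cases haP : a = P
  · subst haP; exact hfP
  by_cases har : a = r
  · subst har
    by_cases hr0 : a = 0
    · subst hr0; exact hzero
    · exact hfr hr0
  by_cases ha0 : a = 0
  · subst ha0; exact hzero
  · have key : ∀ f : Fin N → ℝ, (∀ k, f k = P ∨ f k = r ∨ f k = 0) →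
        (univ.filter fun k => f k = a) = ∅ := by
      intro f hf
      rw [Finset.filter_eq_empty_iff]
      intro k _
      rcases hf k with h' | h' | h' <;> rw [h'] <;>
        first | exact fun hc => haP hc.symm | exact fun hc => har hc.symm | exact fun hc => ha0 hc.symm
    rw [key p hp, key q hq]

lemma base_lemma {N : ℕ} {P : ℝ} (hP0 : 0 < P) (hmN : ⌊1/P⌋₊ ≤ N)
    (hrN : ⌊1/P⌋₊ = N → 1-(⌊1/P⌋₊:ℝ)*P = 0) (hrP : 1-(⌊1/P⌋₊:ℝ)*P < P)
    (p : Fin N → ℝ) (hp0 : ∀ k, 0 ≤ p k) (hpP : ∀ k, p k ≤ P) (hps : ∑ k, p k = 1)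
    (hc : (univ.filter fun k => 0 < p k ∧ p k < P).card ≤ 1) :
    ∃ σ : Equiv.Perm (Fin N), p = wvec N P ∘ σ := by
  set m := ⌊1/P⌋₊ with hm
  set r := 1 - (m:ℝ)*P with hrdef
  set A := univ.filter fun k => p k = P with hA
  set F := univ.filter fun k => 0 < p k ∧ p k < P with hF
  have htri : ∀ k, p k = P ∨ k ∈ F ∨ p k = 0 := by
    intro k
    rcases eq_or_lt_of_le (hpP k) with h | h
    · exact Or.inl h
    · rcases eq_or_lt_of_le (hp0 k) with h0 | h0
      · exact Or.inr (Or.inr h0.symm)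
      · exact Or.inr (Or.inl (Finset.mem_filter.mpr ⟨mem_univ k, h0, h⟩))
  have hdisj : Disjoint A F := by
    rw [Finset.disjoint_left]
    intro k hkA hkF
    have h1 := (Finset.mem_filter.mp hkA).2
    have h2 := (Finset.mem_filter.mp hkF).2
    rw [h1] at h2; exact lt_irrefl P h2.2
  have hsum1 : (A.card : ℝ) * P + ∑ k ∈ F, p k = 1 := by
    have hsub : A ∪ F ⊆ univ := Finset.subset_univ _
    have hzero : ∀ k ∈ univ, k ∉ A ∪ F → p k = 0 := by
      intro k _ hk
      rw [Finset.mem_union] at hk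
      push_neg at hk
      rcases htri k with h | h | h
      · exact absurd (Finset.mem_filter.mpr ⟨mem_univ k, h⟩) hk.1
      · exact absurd h hk.2
      · exact h
    have := Finset.sum_subset hsub hzero
    rw [← hps, ← this, Finset.sum_union hdisj]
    congr 1
    rw [Finset.sum_congr rfl (fun k hk => (Finset.mem_filter.mp hk).2), Finset.sum_const]
    simp [mul_comm]
    exact Or.inl rfl
  -- wvec side facts
  have hwtri : ∀ k, wvec N P k = P ∨ wvec N P k = r ∨ wvec N P k = 0 := by
    intro k
    rcases wvec_cases (P := P) k with ⟨_, hv⟩ | ⟨_, hv⟩ | ⟨_, hv⟩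
    exacts [Or.inl hv, Or.inr (Or.inl hv), Or.inr (Or.inr hv)]
  have hrne : r ≠ P := ne_of_lt hrP
  have hwP : (univ.filter fun k => wvec N P k = P).card = m := by
    have : (univ.filter fun k => wvec N P k = P) = univ.filter fun k : Fin N => (k:ℕ) < m := by
      ext k
      simp only [mem_filter, mem_univ, true_and]
      rcases wvec_cases (P := P) k with ⟨hk, hv⟩ | ⟨hk, hv⟩ | ⟨hk, hv⟩
      · exact ⟨fun _ => hk, fun _ => hv⟩
      · exact ⟨fun h => absurd (hv.symm.trans h) hrne, fun h => absurd h (by omega)⟩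
      · exact ⟨fun h => absurd (hv.symm.trans h).symm (ne_of_gt hP0), fun h => absurd h (by omega)⟩
    rw [this, card_filter_lt m hmN]
  have hwr : r ≠ 0 → (univ.filter fun k => wvec N P k = r).card = 1 := by
    intro hr0
    have hmlt : m < N := lt_of_le_of_ne hmN (fun h => hr0 (hrN h))
    have : (univ.filter fun k => wvec N P k = r) = {(⟨m, hmlt⟩ : Fin N)} := by
      ext k
      simp only [mem_filter, mem_univ, true_and, Finset.mem_singleton]
      rcases wvec_cases (P := P) k with ⟨hk, hv⟩ | ⟨hk, hv⟩ | ⟨hk, hv⟩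
      · rw [hv]
        exact ⟨fun h => absurd h.symm hrne, fun h => absurd (congrArg Fin.val h) (by simp; omega)⟩
      · rw [hv]
        exact ⟨fun _ => Fin.ext hk, fun _ => rfl⟩
      · rw [hv]
        exact ⟨fun h => absurd h.symm hr0, fun h => absurd (congrArg Fin.val h) (by simp; omega)⟩
    rw [this, Finset.card_singleton]
  -- two cases on F
  rcases Nat.le_one_iff_eq_zero_or_eq_one.mp hc with hFc | hFc
  · -- F empty
    have hFe : F = ∅ := Finset.card_eq_zero.mp hFc
    rw [hFe, Finset.sum_empty, add_zero] at hsum1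
    have hmA : m = A.card := by
      have hcd : ((A.card : ℕ) : ℝ) = 1/P := by
        rw [eq_div_iff (ne_of_gt hP0)]; linarith
      rw [hm, ← hcd, Nat.floor_natCast]
    have hr0 : r = 0 := by rw [hrdef, hmA]; linarith
    have ptri : ∀ k, p k = P ∨ p k = r ∨ p k = 0 := by
      intro k
      rcases htri k with h | h | h
      · exact Or.inl h
      · rw [hFe] at h; exact absurd h (Finset.notMem_empty k)
      · exact Or.inr (Or.inr h)
    have hfP : (univ.filter fun k => p k = P).card = (univ.filter fun k => wvec N P k = P).card := by
      rw [hwP, ← hA, hmA]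
    exact exists_perm_comp p (wvec N P)
      (fiber_cards_eq (ne_of_gt hP0) hrne ptri hwtri hfP (fun h => absurd hr0 h))
  · -- F singleton
    obtain ⟨j0, hj0⟩ := Finset.card_eq_one.mp hFc
    have hj0F : j0 ∈ F := hj0 ▸ Finset.mem_singleton_self j0
    have ht : 0 < p j0 ∧ p j0 < P := (Finset.mem_filter.mp hj0F).2
    rw [hj0, Finset.sum_singleton] at hsum1
    have hmA : m = A.card := by
      rw [hm]
      apply (Nat.floor_eq_iff (by positivity)).mpr
      constructor
      · rw [le_div_iff₀ hP0]; linarith [ht.1]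
      · rw [div_lt_iff₀ hP0]; push_cast; nlinarith [ht.2]
    have hrt : r = p j0 := by rw [hrdef, hmA]; linarith
    have hr0 : r ≠ 0 := by rw [hrt]; exact ne_of_gt ht.1
    have ptri : ∀ k, p k = P ∨ p k = r ∨ p k = 0 := by
      intro k
      rcases htri k with h | h | h
      · exact Or.inl h
      · rw [hj0, Finset.mem_singleton] at h
        subst h
        exact Or.inr (Or.inl hrt.symm)
      · exact Or.inr (Or.inr h)
    have hfP : (univ.filter fun k => p k = P).card = (univ.filter fun k => wvec N P k = P).card := by
      rw [hwP, ← hA, hmA]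
    have hfr : (univ.filter fun k => p k = r) = {j0} := by
      ext k
      simp only [mem_filter, mem_univ, true_and, Finset.mem_singleton]
      constructor
      · intro h
        rcases htri k with h' | h' | h'
        · exact absurd (h.symm.trans h') hrne
        · rwa [hj0, Finset.mem_singleton] at h'
        · exact absurd (h.symm.trans h') hr0
      · intro h; subst h; exact hrt.symm
    exact exists_perm_comp p (wvec N P)
      (fiber_cards_eq (ne_of_gt hP0) hrne ptri hwtri hfP
        (fun h => by rw [hfr, hwr hr0, Finset.card_singleton]))

lemma sum_wvec_comp {N : ℕ} {P : ℝ} (f : ℝ → ℝ) (σ : Equiv.Perm (Fin N))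
    {p : Fin N → ℝ} (hp : p = wvec N P ∘ σ) :
    ∑ k, f (p k) = ∑ k, f (wvec N P k) := by
  rw [hp]
  exact Equiv.sum_comp σ (fun k => f (wvec N P k))

lemma core {N : ℕ} {P : ℝ} {φ : ℝ → ℝ} (hφ : StrictConvexOn ℝ (Set.Icc 0 1) φ)
    (hφ0 : φ 0 = 0) (hN : 2 ≤ N) (hP1 : 1/(N:ℝ) ≤ P) (hP2 : P ≤ 1)
    (p : Fin N → ℝ) (hp0 : ∀ k, 0 ≤ p k) (hpP : ∀ k, p k ≤ P) (hps : ∑ k, p k = 1) :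
    ∑ k, φ (p k) ≤ (⌊1/P⌋₊:ℝ) * φ P + φ (1 - (⌊1/P⌋₊:ℝ)*P) ∧
    (∑ k, φ (p k) = (⌊1/P⌋₊:ℝ) * φ P + φ (1 - (⌊1/P⌋₊:ℝ)*P) ↔
      ∃ σ : Equiv.Perm (Fin N), p = wvec N P ∘ σ) := by
  classical
  obtain ⟨hP0, hm1, hmN, hmP, hrP, hrN⟩ := m_facts hN hP1 hP2
  -- the bound, by strong induction on the number of intermediate components
  have bound : ∀ n : ℕ, ∀ q : Fin N → ℝ, (∀ k, 0 ≤ q k) → (∀ k, q k ≤ P) →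
      (∑ k, q k = 1) → (univ.filter fun k => 0 < q k ∧ q k < P).card ≤ n →
      ∑ k, φ (q k) ≤ (⌊1/P⌋₊:ℝ) * φ P + φ (1 - (⌊1/P⌋₊:ℝ)*P) := by
    intro n
    induction n with
    | zero =>
      intro q hq0 hqP hqs hqc
      obtain ⟨σ, hσ⟩ := base_lemma hP0 hmN hrN hrP q hq0 hqP hqs (le_trans hqc (by omega))
      rw [sum_wvec_comp φ σ hσ, sum_wvec_apply φ hφ0 hmN hrN]
    | succ n ih =>
      intro q hq0 hqP hqs hqc
      by_cases hsmall : (univ.filter fun k => 0 < q k ∧ q k < P).card ≤ 1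
      · obtain ⟨σ, hσ⟩ := base_lemma hP0 hmN hrN hrP q hq0 hqP hqs hsmall
        rw [sum_wvec_comp φ σ hσ, sum_wvec_apply φ hφ0 hmN hrN]
      · obtain ⟨q', h0, hPk, hs, hcard, hlt⟩ :=
          step_lemma hφ hP2 q hq0 hqP hqs (by omega)
        exact le_of_lt (lt_of_lt_of_le hlt (ih q' h0 hPk hs (by omega)))
  have hb := bound _ p hp0 hpP hps le_rfl
  refine ⟨hb, ?_, ?_⟩
  · intro heq
    by_cases hsmall : (univ.filter fun k => 0 < p k ∧ p k < P).card ≤ 1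
    · exact base_lemma hP0 hmN hrN hrP p hp0 hpP hps hsmall
    · exfalso
      obtain ⟨q', h0, hPk, hs, hcard, hlt⟩ := step_lemma hφ hP2 p hp0 hpP hps (by omega)
      have := bound _ q' h0 hPk hs le_rfl
      linarith [heq ▸ lt_of_lt_of_le hlt this]
  · rintro ⟨σ, hσ⟩
    rw [sum_wvec_comp φ σ hσ, sum_wvec_apply φ hφ0 hmN hrN]

end SalicruAux

/-- The minimum of `H_{(h,φ)}` over probability vectors with maximal component
`P` equals `h(⌊1/P⌋φ(P) + φ(1−⌊1/P⌋P))`, attained exactly at the permutations of `wvec N P`. -/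
theorem min_entropy_fixed_max_component (e : EntropicPair) {N : ℕ} (hN : 2 ≤ N)
    (P : ℝ) (hP : P ∈ Set.Icc (1 / (N : ℝ)) 1) :
    IsLeast { x : ℝ | ∃ p : Fin N → ℝ, IsProbVec p ∧ (⨆ k, p k) = P ∧ x = e.H p }
      (e.h ((⌊1 / P⌋₊ : ℝ) * e.phi P + e.phi (1 - (⌊1 / P⌋₊ : ℝ) * P))) ∧
    ∀ p : Fin N → ℝ, IsProbVec p → (⨆ k, p k) = P →
      (e.H p = e.h ((⌊1 / P⌋₊ : ℝ) * e.phi P + e.phi (1 - (⌊1 / P⌋₊ : ℝ) * P)) ↔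
        ∃ σ : Equiv.Perm (Fin N), p = wvec N P ∘ σ) := by
  classical
  obtain ⟨hP1, hP2⟩ := hP
  obtain ⟨hP0, hm1, hmN, hmP, hrP, hrN⟩ := m_facts hN hP1 hP2
  have hNpos : 0 < N := by omega
  haveI : Nonempty (Fin N) := ⟨⟨0, hNpos⟩⟩
  set S0 : ℝ := (⌊1 / P⌋₊ : ℝ) * e.phi P + e.phi (1 - (⌊1 / P⌋₊ : ℝ) * P) with hS0
  have hr0 : 0 ≤ 1 - (⌊1/P⌋₊:ℝ)*P := by linarith
  -- wvec basic facts
  have hw0 : ∀ k, 0 ≤ wvec N P k := by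
    intro k
    rcases wvec_cases (P := P) k with ⟨_, hv⟩ | ⟨_, hv⟩ | ⟨_, hv⟩ <;> rw [hv]
    exacts [le_of_lt hP0, hr0]
  have hwP : ∀ k, wvec N P k ≤ P := by
    intro k
    rcases wvec_cases (P := P) k with ⟨_, hv⟩ | ⟨_, hv⟩ | ⟨_, hv⟩ <;> rw [hv]
    exacts [le_of_lt hrP, le_of_lt hP0]
  have hwsum : ∑ k, wvec N P k = 1 := by
    rw [sum_wvec_apply (fun x => x) rfl hmN hrN]; ring
  have hwsup : (⨆ k, wvec N P k) = P := by
    apply le_antisymm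
    · exact ciSup_le hwP
    · have h0 : wvec N P ⟨0, hNpos⟩ = P := by
        unfold wvec
        rw [if_pos (by omega : (0:ℕ) < ⌊1/P⌋₊)]
      calc P = wvec N P ⟨0, hNpos⟩ := h0.symm
        _ ≤ ⨆ k, wvec N P k :=
          le_ciSup (Set.Finite.bddAbove (Set.finite_range _)) _
  -- from sup = P deduce pointwise bound
  have hsup_le : ∀ p : Fin N → ℝ, (⨆ k, p k) = P → ∀ k, p k ≤ P := by
    intro p hsup k
    rw [← hsup]
    exact le_ciSup (Set.Finite.bddAbove (Set.finite_range p)) k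
  -- the key inequality and equality characterization, for both admissibility cases
  have key : ∀ p : Fin N → ℝ, (∀ k, 0 ≤ p k) → (∀ k, p k ≤ P) → ∑ k, p k = 1 →
      e.h S0 ≤ e.h (∑ k, e.phi (p k)) ∧
      (∑ k, e.phi (p k) = S0 ↔ ∃ σ : Equiv.Perm (Fin N), p = wvec N P ∘ σ) := by
    intro p hp0 hpP hps
    rcases e.admissible with ⟨hconc, hmono⟩ | ⟨hconv, hanti⟩
    · have hψ : StrictConvexOn ℝ (Set.Icc (0:ℝ) 1) (fun x => -(e.phi x)) := hconc.neg
      have hc := core hψ (by simp [e.phi_zero]) hN hP1 hP2 p hp0 hpP hps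
      have hsum : ∑ k, (fun x => -(e.phi x)) (p k) = -(∑ k, e.phi (p k)) := by
        simp
      have hS : (⌊1/P⌋₊:ℝ) * (fun x => -(e.phi x)) P +
          (fun x => -(e.phi x)) (1 - (⌊1/P⌋₊:ℝ)*P) = -S0 := by
        simp only [hS0]; ring
      rw [hsum, hS] at hc
      constructor
      · exact hmono.monotone (by linarith [hc.1])
      · rw [← hc.2]
        constructor <;> intro h <;> linarith
    · have hc := core hconv e.phi_zero hN hP1 hP2 p hp0 hpP hps
      exact ⟨hanti.antitone hc.1, hc.2⟩
  have hinj : Function.Injective e.h := by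
    rcases e.admissible with ⟨_, hmono⟩ | ⟨_, hanti⟩
    exacts [hmono.injective, hanti.injective]
  have hHw : e.H (wvec N P) = e.h S0 := by
    unfold EntropicPair.H
    rw [sum_wvec_apply e.phi e.phi_zero hmN hrN]
  constructor
  · constructor
    · exact ⟨wvec N P, ⟨hw0, hwsum⟩, hwsup, hHw.symm⟩
    · rintro x ⟨p, ⟨hp0, hps⟩, hsup, rfl⟩
      exact (key p hp0 (hsup_le p hsup) hps).1
  · rintro p ⟨hp0, hps⟩ hsup
    obtain ⟨_, hiff⟩ := key p hp0 (hsup_le p hsup) hps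
    constructor
    · intro h
      exact hiff.mp (hinj h)
    · intro h
      unfold EntropicPair.H
      rw [hiff.mpr h]
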